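/- Let Γ be a group, G a characteristic subgroup of Γ admitting a nilpotent basis β = (γ₁, …, γ_n), g ∈ Γ, φ an automorphism of Γ, and C an even positive natural number with [Γ : G] ≤ C/2. Let g_* denote the inner automorphism y ↦ g·y·g⁻¹ of Γ. Then φ^{C!} respects β if and only if (φ ∘ g_*)^{C!} respects β. -/

import Mathlib

/-- A list `(γ₁, …, γ_n)` of elements of `Γ` is a *nilpotent basis* of the
subgroup `G` if it generates `G` and `[γᵢ, γⱼ] ∈ ⟨γ₁, …, γ_{i-1}⟩` for all
`1 ≤ i, j ≤ n`. -/
def IsNilpotentBasis {Γ : Type*} [Group Γ] (G : Subgroup Γ) (l : List Γ) : Prop :=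
  Subgroup.closure {x | x ∈ l} = G ∧
    ∀ i j : Fin l.length,
      l.get i * l.get j * (l.get i)⁻¹ * (l.get j)⁻¹ ∈
        Subgroup.closure {x | x ∈ l.take (i : ℕ)}

/-- An automorphism `ψ` of `Γ` *respects* a nilpotent basis `(γ₁, …, γ_n)` of a
subgroup of `Γ` if, with `G_m := ⟨γ₁, …, γ_m⟩` (and `G_0` trivial),
`ψ(G_m) = G_m` and `ψ(x)·x⁻¹ ∈ G_{m-1}` for all `x ∈ G_m`, for every `1 ≤ m ≤ n`. -/
def RespectsBasis {Γ : Type*} [Group Γ] (ψ : MulAut Γ) (l : List Γ) : Prop :=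
  ∀ m : ℕ, 1 ≤ m → m ≤ l.length →
    (Subgroup.closure {x | x ∈ l.take m}).map ψ.toMonoidHom =
        Subgroup.closure {x | x ∈ l.take m} ∧
      ∀ x ∈ Subgroup.closure {x | x ∈ l.take m},
        ψ x * x⁻¹ ∈ Subgroup.closure {x | x ∈ l.take (m - 1)}


section AuxReplace

variable {Γ : Type*} [Group Γ]

variable {Γ : Type*} [Group Γ]

private lemma take_mono (l : List Γ) {a b : ℕ} (h : a ≤ b) :
    Subgroup.closure {x | x ∈ l.take a} ≤ Subgroup.closure {x | x ∈ l.take b} := by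
  apply Subgroup.closure_mono
  intro x hx
  simp only [Set.mem_setOf_eq] at hx ⊢
  have heq : l.take a = (l.take b).take a := by
    rw [List.take_take, Nat.min_eq_left h]
  rw [heq] at hx
  exact List.take_subset _ _ hx

private lemma take_le (l : List Γ) (a : ℕ) :
    Subgroup.closure {x | x ∈ l.take a} ≤ Subgroup.closure {x | x ∈ l} := by
  apply Subgroup.closure_mono
  intro x hx
  exact List.take_subset _ _ hx

private lemma comm_mem (l : List Γ)
    (hl : ∀ i j : Fin l.length, l.get i * l.get j * (l.get i)⁻¹ * (l.get j)⁻¹ ∈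
        Subgroup.closure {x | x ∈ l.take (i : ℕ)}) :
    ∀ m : ℕ, ∀ h ∈ Subgroup.closure {x | x ∈ l}, ∀ x ∈ Subgroup.closure {x | x ∈ l.take m},
      h * x * h⁻¹ * x⁻¹ ∈ Subgroup.closure {x | x ∈ l.take (m - 1)} := by
  intro m
  induction m using Nat.strong_induction_on with
  | _ m IH =>
    match m with
    | 0 =>
      intro h _ x hx
      have : x = 1 := by
        simpa [List.take_zero, Subgroup.mem_bot] using
          (by simpa [List.take_zero] using hx : x ∈ Subgroup.closure (∅ : Set Γ))
      subst this
      simpa using Subgroup.one_mem _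
    | (m' + 1) =>
      -- normality fact: any element of closure l conjugates closure (take m') into itself
      have N : ∀ u ∈ Subgroup.closure {x | x ∈ l}, ∀ v ∈ Subgroup.closure {x | x ∈ l.take m'},
          u * v * u⁻¹ ∈ Subgroup.closure {x | x ∈ l.take m'} := by
        intro u hu v hv
        have h1 := IH m' (Nat.lt_succ_self m') u hu v hv
        have h2 : u * v * u⁻¹ = (u * v * u⁻¹ * v⁻¹) * v := by group
        rw [h2]
        exact Subgroup.mul_mem _ (take_mono l (Nat.sub_le m' 1) h1) hv
      intro h hh
      simp only [Nat.add_sub_cancel]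
      induction hh using Subgroup.closure_induction with
      | one =>
        intro x hx
        have : (1 : Γ) * x * 1⁻¹ * x⁻¹ = 1 := by group
        rw [this]; exact Subgroup.one_mem _
      | mul h₁ h₂ hh₁ hh₂ p₁ p₂ =>
        intro x hx
        have key : (h₁ * h₂) * x * (h₁ * h₂)⁻¹ * x⁻¹ =
            (h₁ * (h₂ * x * h₂⁻¹ * x⁻¹) * h₁⁻¹) * (h₁ * x * h₁⁻¹ * x⁻¹) := by group
        rw [key]
        exact Subgroup.mul_mem _ (N h₁ hh₁ _ (p₂ x hx)) (p₁ x hx)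
      | inv h hh p =>
        intro x hx
        have key : h⁻¹ * x * (h⁻¹)⁻¹ * x⁻¹ = h⁻¹ * (h * x * h⁻¹ * x⁻¹)⁻¹ * (h⁻¹)⁻¹ := by group
        rw [key]
        exact N h⁻¹ (Subgroup.inv_mem _ hh) _ (Subgroup.inv_mem _ (p x hx))
      | mem h hmem =>
        -- h is a generator; induct on x
        obtain ⟨j, hj⟩ := List.mem_iff_get.mp hmem
        intro x hx
        induction hx using Subgroup.closure_induction with
        | one =>
          have : h * 1 * h⁻¹ * (1 : Γ)⁻¹ = 1 := by group
          rw [this]; exact Subgroup.one_mem _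
        | mul x y hx hy px py =>
          have key : h * (x * y) * h⁻¹ * (x * y)⁻¹ =
              (h * x * h⁻¹ * x⁻¹) * (x * (h * y * h⁻¹ * y⁻¹) * x⁻¹) := by group
          rw [key]
          exact Subgroup.mul_mem _ px (N x (take_le l _ hx) _ py)
        | inv x hx px =>
          have key : h * x⁻¹ * h⁻¹ * (x⁻¹)⁻¹ =
              x⁻¹ * (h * x * h⁻¹ * x⁻¹)⁻¹ * (x⁻¹)⁻¹ := by group
          rw [key]
          exact N x⁻¹ (Subgroup.inv_mem _ (take_le l _ hx)) _ (Subgroup.inv_mem _ px)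
        | mem x hxmem =>
          obtain ⟨i', hi'⟩ := List.mem_iff_get.mp hxmem
          have hlen : (l.take (m' + 1)).length = min (m' + 1) l.length := List.length_take
          have hilt : (i' : ℕ) < l.length := lt_of_lt_of_le i'.isLt (by rw [hlen]; exact min_le_right _ _)
          set i : Fin l.length := ⟨(i' : ℕ), hilt⟩ with hi
          have hxi : x = l.get i := by
            rw [← hi']
            simp
            rfl
          have him : (i : ℕ) ≤ m' := by
            have h1 : (i' : ℕ) < m' + 1 := lt_of_lt_of_le i'.isLt (by rw [hlen]; exact min_le_left _ _)
            have h2 : (i : ℕ) = (i' : ℕ) := rfl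
            omega
          have hcomm := take_mono l him (hl i j)
          rw [hj] at hcomm
          rw [hxi, ← hj]
          have key : l.get j * l.get i * (l.get j)⁻¹ * (l.get i)⁻¹ =
              (l.get i * l.get j * (l.get i)⁻¹ * (l.get j)⁻¹)⁻¹ := by group
          rw [key]
          rw [hj]
          exact Subgroup.inv_mem _ hcomm
variable {Γ : Type*} [Group Γ]

private lemma respects_mul {l : List Γ} {ψ c : MulAut Γ}
    (hψ : RespectsBasis ψ l) (hc : RespectsBasis c l) : RespectsBasis (ψ * c) l := by
  intro m h1 h2
  obtain ⟨hψ1, hψ2⟩ := hψ m h1 h2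
  obtain ⟨hc1, hc2⟩ := hc m h1 h2
  have hcomp : (ψ * c).toMonoidHom = ψ.toMonoidHom.comp c.toMonoidHom := by ext x; rfl
  constructor
  · rw [hcomp, ← Subgroup.map_map, hc1, hψ1]
  · intro x hx
    have hcx : c x ∈ Subgroup.closure {x | x ∈ l.take m} := by
      rw [← hc1]; exact Subgroup.mem_map_of_mem _ hx
    have key : (ψ * c) x * x⁻¹ = (ψ (c x) * (c x)⁻¹) * (c x * x⁻¹) := by
      have : (ψ * c) x = ψ (c x) := rfl
      rw [this]; group
    rw [key]
    exact Subgroup.mul_mem _ (hψ2 (c x) hcx) (hc2 x hx)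

private lemma respects_inv {l : List Γ} {c : MulAut Γ}
    (hc : RespectsBasis c l) : RespectsBasis c⁻¹ l := by
  intro m h1 h2
  obtain ⟨hc1, hc2⟩ := hc m h1 h2
  have hid : (c⁻¹.toMonoidHom.comp c.toMonoidHom) = MonoidHom.id Γ := by
    ext x; simp
  have hmap : (Subgroup.closure {x | x ∈ l.take m}).map c⁻¹.toMonoidHom =
      Subgroup.closure {x | x ∈ l.take m} := by
    conv_lhs => rw [← hc1]
    rw [Subgroup.map_map, hid, Subgroup.map_id]
  refine ⟨hmap, ?_⟩
  intro x hx
  have hy : c⁻¹ x ∈ Subgroup.closure {x | x ∈ l.take m} := by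
    rw [← hmap]; exact Subgroup.mem_map_of_mem _ hx
  have := hc2 (c⁻¹ x) hy
  rw [MulAut.apply_inv_self] at this
  have key : c⁻¹ x * x⁻¹ = (x * (c⁻¹ x)⁻¹)⁻¹ := by group
  rw [key]
  exact Subgroup.inv_mem _ this

private def conjSeq (φ : MulAut Γ) (g : Γ) : ℕ → Γ
  | 0 => 1
  | n + 1 => ((φ ^ n)⁻¹) g * conjSeq φ g n

private lemma conj_swap (ψ : MulAut Γ) (a : Γ) :
    MulAut.conj a * ψ = ψ * MulAut.conj (ψ⁻¹ a) := by
  ext x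
  simp [MulAut.conj_apply, MulAut.mul_apply, map_mul, map_inv, MulAut.apply_inv_self]

private lemma pow_eq (φ : MulAut Γ) (g : Γ) (n : ℕ) :
    (φ * MulAut.conj g) ^ n = φ ^ n * MulAut.conj (conjSeq φ g n) := by
  induction n with
  | zero => simp [conjSeq]
  | succ n ih =>
    rw [pow_succ', ih, pow_succ']
    rw [show φ * MulAut.conj g * (φ ^ n * MulAut.conj (conjSeq φ g n)) =
        φ * (MulAut.conj g * φ ^ n) * MulAut.conj (conjSeq φ g n) by group]
    rw [conj_swap (φ ^ n) g]
    rw [conjSeq, map_mul]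
    group

private lemma w_succ (φ : MulAut Γ) (g : Γ) (n : ℕ) :
    (φ ^ (n + 1)) (conjSeq φ g (n + 1)) = φ g * φ ((φ ^ n) (conjSeq φ g n)) := by
  rw [conjSeq, map_mul]
  congr 1
  · rw [show φ ^ (n + 1) = φ * φ ^ n from pow_succ' φ n]
    rw [MulAut.mul_apply, MulAut.apply_inv_self]
  · rw [show φ ^ (n + 1) = φ * φ ^ n from pow_succ' φ n]
    rfl

private lemma conj_respects (l : List Γ)
    (hl : ∀ i j : Fin l.length, l.get i * l.get j * (l.get i)⁻¹ * (l.get j)⁻¹ ∈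
        Subgroup.closure {x | x ∈ l.take (i : ℕ)}) (h : Γ)
    (hh : h ∈ Subgroup.closure {x | x ∈ l}) :
    RespectsBasis (MulAut.conj h) l := by
  intro m _ _
  refine ⟨le_antisymm ?_ ?_, ?_⟩
  · rintro y hy
    obtain ⟨x, hx, rfl⟩ := Subgroup.mem_map.mp hy
    have h1 := comm_mem l hl m h hh x hx
    have key : (MulAut.conj h).toMonoidHom x = (h * x * h⁻¹ * x⁻¹) * x := by
      show h * x * h⁻¹ = _
      group
    rw [key]
    exact Subgroup.mul_mem _ (take_mono l (Nat.sub_le m 1) h1) hx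
  · intro x hx
    have h2 := comm_mem l hl m h⁻¹ (Subgroup.inv_mem _ hh) x hx
    refine Subgroup.mem_map.mpr ⟨h⁻¹ * x * h, ?_, ?_⟩
    · have key : h⁻¹ * x * h = (h⁻¹ * x * (h⁻¹)⁻¹ * x⁻¹) * x := by group
      rw [key]
      exact Subgroup.mul_mem _ (take_mono l (Nat.sub_le m 1) h2) hx
    · show h * (h⁻¹ * x * h) * h⁻¹ = x
      group
  · intro x hx
    have h1 := comm_mem l hl m h hh x hx
    have key : (MulAut.conj h) x * x⁻¹ = h * x * h⁻¹ * x⁻¹ := by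
      rw [MulAut.conj_apply]
    rw [key]
    exact h1
variable {Γ : Type*} [Group Γ]

private lemma conjSeq_mem (G : Subgroup Γ) [G.Characteristic] (φ : MulAut Γ) (g : Γ)
    (hidxfin : G.index ≠ 0) {C : ℕ} (hle : G.index ≤ C) :
    conjSeq φ g (Nat.factorial C) ∈ G := by
  classical
  haveI : G.FiniteIndex := ⟨hidxfin⟩
  haveI : Fintype (Γ ⧸ G) := Fintype.ofFinite _
  have hmem : ∀ (ψ : MulAut Γ) (x : Γ), x ∈ G → ψ x ∈ G := by
    intro ψ x hx
    have hfix := Subgroup.characteristic_iff_comap_eq.mp ‹G.Characteristic› ψ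
    rw [← hfix] at hx
    exact hx
  have hcompat : ∀ (a b : Γ), (QuotientGroup.leftRel G) a b →
      (QuotientGroup.leftRel G) (φ (g * a)) (φ (g * b)) := by
    intro a b hab
    rw [QuotientGroup.leftRel_apply] at hab ⊢
    have heq : (φ (g * a))⁻¹ * φ (g * b) = φ (a⁻¹ * b) := by
      rw [← map_inv, ← map_mul]; congr 1; group
    rw [heq]; exact hmem φ _ hab
  have hcompat' : ∀ (a b : Γ), (QuotientGroup.leftRel G) a b →
      (QuotientGroup.leftRel G) (g⁻¹ * φ⁻¹ a) (g⁻¹ * φ⁻¹ b) := by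
    intro a b hab
    rw [QuotientGroup.leftRel_apply] at hab ⊢
    have heq : (g⁻¹ * φ⁻¹ a)⁻¹ * (g⁻¹ * φ⁻¹ b) = φ⁻¹ (a⁻¹ * b) := by
      rw [map_mul, map_inv]; group
    rw [heq]; exact hmem φ⁻¹ _ hab
  let T : Equiv.Perm (Γ ⧸ G) :=
    { toFun := Quotient.map' (fun x => φ (g * x)) hcompat
      invFun := Quotient.map' (fun x => g⁻¹ * φ⁻¹ x) hcompat'
      left_inv := by
        intro q
        induction q using Quotient.inductionOn' with
        | h a =>
          rw [Quotient.map'_mk'', Quotient.map'_mk'', MulAut.inv_apply_self,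
            inv_mul_cancel_left]
      right_inv := by
        intro q
        induction q using Quotient.inductionOn' with
        | h a =>
          rw [Quotient.map'_mk'', Quotient.map'_mk'', mul_inv_cancel_left,
            MulAut.apply_inv_self] }
  have Tapp : ∀ a : Γ, T (Quotient.mk'' a) = Quotient.mk'' (φ (g * a)) := by
    intro a
    show Quotient.map' (fun x => φ (g * x)) hcompat (Quotient.mk'' a) = _
    rw [Quotient.map'_mk'']
  have horder : T ^ (Nat.factorial C) = 1 := by
    have h1 : orderOf T ∣ Nat.factorial (Fintype.card (Γ ⧸ G)) := by
      have h0 := orderOf_dvd_card (x := T)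
      rwa [Fintype.card_perm] at h0
    have hcard : Fintype.card (Γ ⧸ G) ≤ C := by
      rw [← Nat.card_eq_fintype_card, ← Subgroup.index_eq_card]; exact hle
    exact orderOf_dvd_iff_pow_eq_one.mp (h1.trans (Nat.factorial_dvd_factorial hcard))
  have hiter : ∀ n : ℕ, (T ^ n) (Quotient.mk'' (1 : Γ)) =
      Quotient.mk'' ((φ ^ n) (conjSeq φ g n)) := by
    intro n
    induction n with
    | zero => simp [conjSeq]
    | succ n ih =>
      rw [pow_succ' T n, Equiv.Perm.mul_apply, ih, w_succ, Tapp]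
      congr 1
      rw [map_mul]
  have hfinal := hiter (Nat.factorial C)
  rw [horder] at hfinal
  simp only [Equiv.Perm.coe_one, id_eq] at hfinal
  have h2 := Quotient.eq''.mp hfinal
  rw [QuotientGroup.leftRel_apply] at h2
  simp only [inv_one, one_mul] at h2
  have hfix := Subgroup.characteristic_iff_comap_eq.mp ‹G.Characteristic› (φ ^ Nat.factorial C)
  rw [← hfix]
  exact h2

end AuxReplace

/-- **Proposition (replace).**
Let `Γ` be a group, `G` a characteristic subgroup of `Γ` admitting a nilpotent
basis `β`, `g ∈ Γ`, `φ` an automorphism of `Γ`, and `C` an even positive natural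
with `[Γ : G] ≤ C/2`.  Then `φ^{C!}` respects `β` iff `(φ ∘ g_*)^{C!}` respects
`β`. -/
theorem replace (Γ : Type*) [Group Γ] (G : Subgroup Γ) (hchar : G.Characteristic)
    (l : List Γ) (hl : IsNilpotentBasis G l) (g : Γ) (φ : MulAut Γ)
    (C : ℕ) (hC : 0 < C) (heven : Even C)
    (hidxfin : G.index ≠ 0) (hidx : G.index ≤ C / 2) :
    RespectsBasis (φ ^ Nat.factorial C) l ↔
      RespectsBasis ((φ * MulAut.conj g) ^ Nat.factorial C) l := by
  obtain ⟨hgen, hnil⟩ := hl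
  set N := Nat.factorial C with hN
  have hCle : G.index ≤ C := le_trans hidx (Nat.div_le_self C 2)
  have hk : conjSeq φ g N ∈ Subgroup.closure {x | x ∈ l} := by
    rw [hgen]
    exact conjSeq_mem G φ g hidxfin hCle
  have hconj := conj_respects l hnil _ hk
  constructor
  · intro hresp
    rw [pow_eq]
    exact respects_mul hresp hconj
  · intro hresp
    have h2 := respects_mul hresp (respects_inv hconj)
    have key : (φ * MulAut.conj g) ^ N * (MulAut.conj (conjSeq φ g N))⁻¹ = φ ^ N := by
      rw [pow_eq]
      group
    rw [key] at h2
    exact h2
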